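/- arXiv:1709.04566 — 5 statements merged into one kernel-verified Lean document; each statement's English description precedes it below -/
import Mathlib

section
/- For a polynomial f in F_q[x] and b in F_q with b ≠ 0, f(x+b) = f(x) if and only if f(x) = g(x^p - b^{p-1} x) for some polynomial g in F_q[x], where p is the characteristic of F_q. -/
open Polynomial

section Aux
variable {p : ℕ} [Fact p.Prime] {F : Type*} [Field F] [Fintype F] [CharP F p]

lemma aux_eval_shift (b : F) (f : F[X]) (hf : f.comp (X + C b) = f) (x : F) :
    f.eval (x + b) = f.eval x := by
  conv_rhs => rw [← hf]
  simp [eval_comp]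

lemma aux_const_of_small (b : F) (hb : b ≠ 0) (r : F[X]) (hr : r.comp (X + C b) = r)
    (hd : r.natDegree < p) : r = C (r.eval 0) := by
  have hp : Fact p.Prime := inferInstance
  have key : ∀ n : ℕ, r.eval ((n : F) * b) = r.eval 0 := by
    intro n
    induction n with
    | zero => simp
    | succ n ih =>
        have : ((n + 1 : ℕ) : F) * b = (n : F) * b + b := by push_cast; ring
        rw [this, aux_eval_shift b r hr, ih]
  have hinj : Function.Injective (fun k : ZMod p => (ZMod.castHom (dvd_refl p) F k) * b) := by
    intro x y hxy
    have := mul_right_cancel₀ hb hxy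
    exact (ZMod.castHom (dvd_refl p) F).injective this
  have hz : r - C (r.eval 0) = 0 := by
    apply Polynomial.eq_zero_of_natDegree_lt_card_of_eval_eq_zero _ hinj
    · intro k
      have : (ZMod.castHom (dvd_refl p) F k : F) = ((k.val : ℕ) : F) := by
        simp [ZMod.natCast_val]
      simp only [eval_sub, eval_C, this, key k.val, sub_self]
    · calc (r - C (r.eval 0)).natDegree ≤ r.natDegree := by
            apply (natDegree_sub_le _ _).trans
            simp [natDegree_C]
          _ < p := hd
          _ = Fintype.card (ZMod p) := (ZMod.card p).symm
  have := sub_eq_zero.mp hz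
  exact this

lemma aux_T_comp (b : F) : (X ^ p - C (b ^ (p - 1)) * X).comp (X + C b) =
    X ^ p - C (b ^ (p - 1)) * X := by
  have hp1 : 1 ≤ p := (Fact.out : p.Prime).one_lt.le
  have hpow : (X + C b) ^ p = X ^ p + C (b ^ p) := by
    rw [add_pow_char, ← C_pow]
  have hbb : b ^ (p - 1) * b = b ^ p := by
    rw [← pow_succ, Nat.sub_add_cancel hp1]
  rw [sub_comp, pow_comp, X_comp, mul_comp, C_comp, X_comp, hpow]
  rw [mul_add, ← C_mul, hbb]
  ring

lemma aux_T_monic (b : F) : (X ^ p - C (b ^ (p - 1)) * X : F[X]).Monic := by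
  apply Polynomial.monic_X_pow_sub
  refine lt_of_le_of_lt (degree_C_mul_X_le _) ?_
  exact_mod_cast Nat.one_lt_cast.mpr (Fact.out : p.Prime).one_lt

lemma aux_T_natDegree (b : F) : (X ^ p - C (b ^ (p - 1)) * X : F[X]).natDegree = p := by
  have h2 : 1 < p := (Fact.out : p.Prime).one_lt
  rw [natDegree_sub_eq_left_of_natDegree_lt, natDegree_X_pow]
  calc (C (b ^ (p - 1)) * X).natDegree ≤ X.natDegree := natDegree_C_mul_le _ _
    _ < (X ^ p : F[X]).natDegree := by rw [natDegree_X, natDegree_X_pow]; exact h2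

lemma aux_main (b : F) (hb : b ≠ 0) : ∀ n (f : F[X]), f.natDegree ≤ n →
    f.comp (X + C b) = f → ∃ g : F[X], f = g.comp (X ^ p - C (b ^ (p - 1)) * X) := by
  intro n
  induction n using Nat.strong_induction_on with
  | _ n ih =>
    intro f hfn hf
    set T : F[X] := X ^ p - C (b ^ (p - 1)) * X with hT
    have hTm : T.Monic := aux_T_monic b
    have hTd : T.natDegree = p := aux_T_natDegree b
    have hppos : 0 < p := (Fact.out : p.Prime).pos
    by_cases hsmall : f.natDegree < p
    · refine ⟨C (f.eval 0), ?_⟩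
      rw [C_comp]
      exact aux_const_of_small b hb f hf hsmall
    · push_neg at hsmall
      set q := f /ₘ T with hq
      set r := f %ₘ T with hr
      have hdiv : r + T * q = f := modByMonic_add_div f T
      have hrd : r.natDegree < p := by
        have hT1 : T ≠ 1 := by
          intro h
          have := congrArg natDegree h
          rw [hTd, natDegree_one] at this
          omega
        have := natDegree_modByMonic_lt f hTm hT1
        rwa [hTd] at this
      -- invariance of q and r
      have hTc : T.comp (X + C b) = T := aux_T_comp b
      have hcomp : r.comp (X + C b) + T * q.comp (X + C b) = f := by
        conv_rhs => rw [← hf, ← hdiv]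
        rw [add_comp, mul_comp, hTc]
      have heq : T * (q.comp (X + C b) - q) = r - r.comp (X + C b) := by
        have := hcomp.trans hdiv.symm
        ring_nf
        ring_nf at this
        linear_combination this
      have hrc_deg : (r.comp (X + C b)).natDegree < p := by
        rw [natDegree_comp, natDegree_X_add_C, mul_one]; exact hrd
      have hq_inv : q.comp (X + C b) = q := by
        by_contra hne
        have hs : q.comp (X + C b) - q ≠ 0 := sub_ne_zero.mpr hne
        have hlhs : (T * (q.comp (X + C b) - q)).natDegree =
            p + (q.comp (X + C b) - q).natDegree := by
          rw [hTm.natDegree_mul' (by simpa using hs)] -- fallback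
          rw [hTd]
        have hrhs : (r - r.comp (X + C b)).natDegree < p := by
          apply lt_of_le_of_lt (natDegree_sub_le _ _)
          exact max_lt hrd hrc_deg
        rw [heq] at hlhs
        omega
      have hr_inv : r.comp (X + C b) = r := by
        rw [hq_inv, sub_self, mul_zero] at heq
        exact (sub_eq_zero.mp heq.symm).symm
      -- q nonzero and degree drop
      have hqne : q ≠ 0 := by
        intro h0
        rw [h0, mul_zero, add_zero] at hdiv
        rw [← hdiv] at hsmall
        omega
      have hdeg_q : q.natDegree < n := by
        have hTqne : T * q ≠ 0 := mul_ne_zero hTm.ne_zero hqne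
        have hmul : (T * q).natDegree = p + q.natDegree := by
          rw [hTm.natDegree_mul' (by simp [hqne])]
          rw [hTd]
        have hfd : f.natDegree = p + q.natDegree := by
          rw [← hdiv, add_comm]
          rw [natDegree_add_eq_left_of_degree_lt, hmul]
          rcases eq_or_ne r 0 with h0 | h0
          · rw [h0, degree_zero]
            exact bot_lt_iff_ne_bot.mpr (degree_eq_bot.not.mpr hTqne)
          · rw [degree_eq_natDegree h0, degree_eq_natDegree hTqne]
            exact_mod_cast lt_of_lt_of_le hrd (by rw [hmul]; omega)
        omega
      obtain ⟨g', hg'⟩ := ih q.natDegree hdeg_q q le_rfl hq_inv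
      refine ⟨g' * X + C (r.eval 0), ?_⟩
      rw [add_comp, mul_comp, X_comp, C_comp, ← hg', ← hdiv,
        ← aux_const_of_small b hb r hr_inv hrd]
      ring

end Aux

/-- For a polynomial `f ∈ F_q[x]` and `b ≠ 0` in `F_q`, `f(x+b) = f(x)` iff
`f(x) = g(x^p - b^(p-1) x)` for some `g`, where `p = char F_q`. -/
theorem stmt0 (p : ℕ) [Fact p.Prime] (F : Type*) [Field F] [Fintype F] [CharP F p]
    (b : F) (hb : b ≠ 0) (f : F[X]) :
    f.comp (X + C b) = f ↔ ∃ g : F[X], f = g.comp (X ^ p - C (b ^ (p - 1)) * X) := by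
  constructor
  · intro hf
    exact aux_main b hb f.natDegree f le_rfl hf
  · rintro ⟨g, rfl⟩
    rw [comp_assoc, aux_T_comp]
end

section
/- Let φ be the F_q-automorphism of F_q[x_1,...,x_n] (n ≥ 2) given by x_i ↦ x_i + 1 for 1 ≤ i ≤ t (where 2 ≤ t ≤ n) and x_i ↦ x_i for i > t. Then the subring of polynomials fixed by φ equals the F_q-subalgebra generated by x_1 - x_2, x_2 - x_3, ..., x_{t-1} - x_t, x_t^p - x_t, x_{t+1}, ..., x_n. -/
section Helpers
open Polynomial

lemma const_of_fixed {p : ℕ} [Fact p.Prime] {R : Type*} [CommRing R] [IsDomain R] [CharP R p]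
    (r : R[X]) (hfix : r.comp (X + 1) = r) (hdeg : r.natDegree < p) :
    r = Polynomial.C (r.eval 0) := by
  have heval : ∀ k : ℕ, r.eval (k : R) = r.eval 0 := by
    intro k
    induction k with
    | zero => simp
    | succ k ih =>
      have : r.eval ((k : R) + 1) = r.eval (k : R) := by
        conv_rhs => rw [← hfix]
        simp [eval_comp]
      push_cast
      rw [this, ih]
  have h0 : r - C (r.eval 0) = 0 := by
    apply Polynomial.eq_zero_of_natDegree_lt_card_of_eval_eq_zero _
      (f := fun k : Fin p => ((k : ℕ) : R))
    · have hd : ∀ a b : Fin p, a ≤ b → ((a : ℕ) : R) = ((b : ℕ) : R) → a = b := by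
        intro a b hle h
        have h2 : (((b : ℕ) - (a : ℕ) : ℕ) : R) = 0 := by
          push_cast [Nat.cast_sub (Fin.le_iff_val_le_val.mp hle)]
          rw [← h]; ring
        rw [CharP.cast_eq_zero_iff R p] at h2
        have hb : (b : ℕ) - (a : ℕ) < p := by omega
        have := Nat.eq_zero_of_dvd_of_lt h2
        have : (b:ℕ) - (a:ℕ) = 0 := by
          rcases Nat.eq_zero_or_pos ((b:ℕ) - (a:ℕ)) with h|h
          · exact h
          · exact absurd hb (not_lt.mpr (Nat.le_of_dvd h h2))
        exact Fin.le_antisymm hle (Fin.le_iff_val_le_val.mpr (by omega))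
      intro a b hab
      rcases le_total a b with h|h
      · exact hd a b h hab
      · exact (hd b a h hab.symm).symm
    · intro k
      simp [heval]
    · simpa using lt_of_le_of_lt (Polynomial.natDegree_sub_C (a := r.eval 0)).le hdeg
  linear_combination h0

lemma core {p : ℕ} [Fact p.Prime] {R : Type*} [CommRing R] [IsDomain R] [CharP R p]
    (f : R[X]) (hf : f.comp (X + 1) = f) :
    f ∈ Algebra.adjoin R {(X : R[X]) ^ p - X} := by
  have hp : p.Prime := Fact.out
  have hu : ((X : R[X]) ^ p - X).Monic := by
    apply monic_X_pow_sub
    simpa using (by exact_mod_cast hp.one_lt : (1 : WithBot ℕ) < p)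
  have hudeg : ((X : R[X]) ^ p - X).degree = (p : WithBot ℕ) := by
    rw [Polynomial.degree_sub_eq_left_of_degree_lt] <;>
      simp [Polynomial.degree_X_pow, Polynomial.degree_X]
    exact_mod_cast hp.one_lt
  have hund : ((X : R[X]) ^ p - X).natDegree = p :=
    Polynomial.natDegree_eq_of_degree_eq_some hudeg
  have hucomp : ((X : R[X]) ^ p - X).comp (X + 1) = (X : R[X]) ^ p - X := by
    simp only [sub_comp, pow_comp, X_comp]
    rw [add_pow_char]
    ring
  suffices H : ∀ N, ∀ f : R[X], f.natDegree < N → f.comp (X + 1) = f →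
      f ∈ Algebra.adjoin R {(X : R[X]) ^ p - X} by
    exact H (f.natDegree + 1) f (Nat.lt_succ_self _) hf
  intro N
  induction N with
  | zero => intro f h; omega
  | succ N ih =>
    intro f hdeg hfix
    by_cases hdf : f.natDegree < p
    · rw [const_of_fixed f hfix hdf]
      exact Subalgebra.algebraMap_mem _ _
    · set u := (X : R[X]) ^ p - X with hu_def
      have hdiv : f %ₘ u + u * (f /ₘ u) = f := modByMonic_add_div f u
      have hfixqr : f /ₘ u = (f /ₘ u).comp (X + 1) ∧ f %ₘ u = (f %ₘ u).comp (X + 1) := by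
        apply div_modByMonic_unique _ _ hu
        constructor
        · calc (f %ₘ u).comp (X + 1) + u * (f /ₘ u).comp (X + 1)
              = (f %ₘ u + u * (f /ₘ u)).comp (X + 1) := by
                rw [add_comp, mul_comp, hucomp]
            _ = f := by rw [hdiv, hfix]
        · rcases eq_or_ne (f %ₘ u) 0 with h|h
          · rw [h, zero_comp, degree_zero]
            exact bot_lt_iff_ne_bot.mpr (fun hc => hu.ne_zero (degree_eq_bot.mp hc))
          · have h1 : ((f %ₘ u).comp (X + 1)).natDegree = (f %ₘ u).natDegree := by
              have := Polynomial.natDegree_taylor (f %ₘ u) (1 : R)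
              rwa [taylor_apply, map_one] at this
            have h2 : degree (f %ₘ u) < degree u := degree_modByMonic_lt f hu
            have h3 : (f %ₘ u).comp (X + 1) ≠ 0 := by
              intro hc
              apply h
              have := congrArg (·.comp (X - 1)) hc
              simp only [zero_comp, comp_assoc] at this
              simpa [add_comp, sub_comp, X_comp, one_comp] using this
            rw [degree_eq_natDegree h3, h1, ← degree_eq_natDegree h]
            exact h2
      have hq : f /ₘ u ∈ Algebra.adjoin R {(X : R[X]) ^ p - X} := by
        apply ih
        · have hnd := natDegree_divByMonic f hu
          rw [hund] at hnd
          have hp2 := hp.two_le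
          rw [hnd]
          omega
        · exact hfixqr.1.symm
      have hr : f %ₘ u ∈ Algebra.adjoin R {(X : R[X]) ^ p - X} := by
        have hrd : (f %ₘ u).natDegree < p := by
          have h2 : degree (f %ₘ u) < degree u := degree_modByMonic_lt f hu
          have := natDegree_modByMonic_lt f hu (fun hc => by
            have h2p := hp.two_le
            rw [hc, natDegree_one] at hund; omega)
          omega
        rw [const_of_fixed _ hfixqr.2.symm hrd]
        exact Subalgebra.algebraMap_mem _ _
      rw [← hdiv]
      exact add_mem hr (mul_mem (Algebra.subset_adjoin rfl) hq)
open Polynomial in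
lemma comp_eq_aevalP {R : Type*} [CommSemiring R] (f g : R[X]) : f.comp g = Polynomial.aeval g f := by
  rw [Polynomial.aeval_def, Polynomial.comp, Polynomial.algebraMap_eq]


end Helpers

open MvPolynomial

set_option maxHeartbeats 1000000 in
open MvPolynomial in
lemma part2 {p : ℕ} [Fact p.Prime] {F : Type*} [Field F] [CharP F p] {n : ℕ} (j : Fin n)
    (f : MvPolynomial (Fin n) F) :
    aeval (fun i => if i = j then X j + 1 else X i) f = f ↔
      f ∈ Algebra.adjoin F (({X j ^ p - X j} ∪ {g | ∃ i, i ≠ j ∧ g = X i}) :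
        Set (MvPolynomial (Fin n) F)) := by
  classical
  set R := MvPolynomial {i : Fin n // i ≠ j} F with hR
  set G : Set (MvPolynomial (Fin n) F) :=
    ({X j ^ p - X j} ∪ {g | ∃ i, i ≠ j ∧ g = X i}) with hG
  constructor
  · -- forward: fixed → mem adjoin
    intro hfix
    let e : MvPolynomial (Fin n) F ≃ₐ[F] Polynomial R :=
      (renameEquiv F (Equiv.optionSubtypeNe j).symm).trans (optionEquivLeft F _)
    have heXj : e (X j) = Polynomial.X := by
      simp only [e, AlgEquiv.trans_apply, renameEquiv_apply, rename_X,
        Equiv.optionSubtypeNe_symm_self]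
      exact optionEquivLeft_X_none F _
    have heXi : ∀ (i : Fin n) (h : i ≠ j), e (X i) = Polynomial.C (X ⟨i, h⟩) := by
      intro i h
      simp only [e, AlgEquiv.trans_apply, renameEquiv_apply, rename_X,
        Equiv.optionSubtypeNe_symm_of_ne h]
      exact optionEquivLeft_X_some F _ _
    have key : ∀ g, e (aeval (fun i => if i = j then X j + 1 else X i) g)
        = (Polynomial.aeval (Polynomial.X + 1 : Polynomial R)).restrictScalars F (e g) := by
      have h : (e.toAlgHom.comp (aeval (fun i => if i = j then X j + 1 else X i)))
          = ((Polynomial.aeval (Polynomial.X + 1 : Polynomial R)).restrictScalars F).comp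
            e.toAlgHom := by
        apply MvPolynomial.algHom_ext
        intro i
        simp only [AlgHom.coe_comp, Function.comp_apply, AlgEquiv.toAlgHom_eq_coe,
          AlgHom.coe_coe, MvPolynomial.aeval_X, AlgHom.coe_restrictScalars']
        by_cases h : i = j
        · subst h
          simp [heXj, map_add, map_one]
        · simp [if_neg h, heXi i h]
      exact fun g => DFunLike.congr_fun h g
    set u : Polynomial R := Polynomial.X ^ p - Polynomial.X with hu
    have heu : e (X j ^ p - X j) = u := by
      rw [map_sub, map_pow, heXj]
    have hcomp : (e f).comp (Polynomial.X + 1) = e f := by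
      rw [comp_eq_aevalP]
      have := congrArg e hfix
      rw [key] at this
      exact this
    have hmem : e f ∈ Algebra.adjoin R {u} := core (e f) hcomp
    have hsub : ∀ x ∈ Algebra.adjoin R {u},
        x ∈ Algebra.adjoin F ({u} ∪ Set.range (Polynomial.C : R → Polynomial R)) := by
      intro x hx
      induction hx using Algebra.adjoin_induction with
      | mem x hx => exact Algebra.subset_adjoin (Or.inl hx)
      | algebraMap r => exact Algebra.subset_adjoin (Or.inr ⟨r, rfl⟩)
      | add x y hx hy ihx ihy => exact add_mem ihx ihy
      | mul x y hx hy ihx ihy => exact mul_mem ihx ihy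
    have hCmem : ∀ r : R, e.symm (Polynomial.C r) ∈ Algebra.adjoin F G := by
      intro r
      induction r using MvPolynomial.induction_on with
      | C a =>
        have h1 : (Polynomial.C (C a : R) : Polynomial R) = algebraMap F (Polynomial R) a := rfl
        rw [h1, AlgEquiv.commutes]
        exact Subalgebra.algebraMap_mem _ _
      | add q r hq hr => rw [map_add, map_add]; exact add_mem hq hr
      | mul_X q s hq =>
        rw [map_mul, map_mul]
        refine mul_mem hq ?_
        have h1 : e (X (s : Fin n)) = Polynomial.C (X s) := by
          rw [heXi (s : Fin n) s.2, Subtype.coe_eta]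
        rw [← h1, AlgEquiv.symm_apply_apply]
        exact Algebra.subset_adjoin (Or.inr ⟨(s : Fin n), s.2, rfl⟩)
    have h2 : e f ∈ Algebra.adjoin F ({u} ∪ Set.range (Polynomial.C : R → Polynomial R)) :=
      hsub _ hmem
    have h3 : f ∈ (Algebra.adjoin F
        ({u} ∪ Set.range (Polynomial.C : R → Polynomial R))).map e.symm.toAlgHom :=
      ⟨e f, h2, e.symm_apply_apply f⟩
    rw [AlgHom.map_adjoin] at h3
    refine Algebra.adjoin_le ?_ h3
    rintro x ⟨y, hy, rfl⟩
    rcases hy with hy | ⟨r, rfl⟩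
    · rw [Set.mem_singleton_iff] at hy
      subst hy
      rw [← heu, AlgEquiv.toAlgHom_eq_coe, AlgEquiv.coe_toAlgHom, AlgEquiv.symm_apply_apply]
      exact Algebra.subset_adjoin (Or.inl rfl)
    · exact hCmem r
  · -- backward: mem adjoin → fixed
    intro h
    have hle : Algebra.adjoin F G ≤
        AlgHom.equalizer
          (MvPolynomial.aeval (R := F)
            (fun i : Fin n => if i = j then X j + 1 else X i))
          (AlgHom.id F (MvPolynomial (Fin n) F)) := by
      rw [Algebra.adjoin_le_iff]
      rintro x (hx | ⟨i, hij, rfl⟩)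
      · rw [Set.mem_singleton_iff] at hx
        subst hx
        simp only [SetLike.mem_coe, AlgHom.mem_equalizer, AlgHom.coe_id, id_eq,
          map_sub, map_pow, MvPolynomial.aeval_X, if_pos rfl, if_true]
        rw [add_pow_char, one_pow]
        ring
      · simp only [SetLike.mem_coe, AlgHom.mem_equalizer, AlgHom.coe_id, id_eq,
          MvPolynomial.aeval_X, if_neg hij]
    exact hle h

set_option maxHeartbeats 1000000

/-- Fixed-point subring of the automorphism `x_i ↦ x_i + 1` for `i < t`, `x_i ↦ x_i` for
`i ≥ t` (with `2 ≤ t ≤ n`): it equals the `F_q`-subalgebra generated by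
`x_1 - x_2, …, x_{t-1} - x_t, x_t^p - x_t, x_{t+1}, …, x_n`. -/
theorem stmt6 (p : ℕ) [Fact p.Prime] (F : Type*) [Field F] [Fintype F] [CharP F p]
    {n : ℕ} (t : ℕ) (ht2 : 2 ≤ t) (htn : t ≤ n) :
    {f : MvPolynomial (Fin n) F |
        aeval (fun i : Fin n => if (i : ℕ) < t then X i + 1 else X i) f = f} =
      ↑(Algebra.adjoin F
        ({g : MvPolynomial (Fin n) F | ∃ (i : ℕ) (h : i + 1 < t),
            g = X (⟨i, by omega⟩ : Fin n) - X (⟨i + 1, by omega⟩ : Fin n)} ∪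
          {X (⟨t - 1, by omega⟩ : Fin n) ^ p - X (⟨t - 1, by omega⟩ : Fin n)} ∪
          {g : MvPolynomial (Fin n) F | ∃ (i : ℕ) (h1 : t ≤ i) (h2 : i < n),
            g = X (⟨i, h2⟩ : Fin n)})) := by
  classical
  have hn : 0 < n := by omega
  set j : Fin n := ⟨t - 1, by omega⟩ with hj
  have hjval : (j : ℕ) = t - 1 := rfl
  have hval : ∀ (i : ℕ) (h : i < n), ((⟨i, h⟩ : Fin n) : ℕ) = i := fun _ _ => rfl
  set S : Set (MvPolynomial (Fin n) F) :=
    ({g : MvPolynomial (Fin n) F | ∃ (i : ℕ) (h : i + 1 < t),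
        g = X (⟨i, by omega⟩ : Fin n) - X (⟨i + 1, by omega⟩ : Fin n)} ∪
      {X (⟨t - 1, by omega⟩ : Fin n) ^ p - X (⟨t - 1, by omega⟩ : Fin n)} ∪
      {g : MvPolynomial (Fin n) F | ∃ (i : ℕ) (h1 : t ≤ i) (h2 : i < n),
        g = X (⟨i, h2⟩ : Fin n)}) with hS
  set G : Set (MvPolynomial (Fin n) F) :=
    ({X j ^ p - X j} ∪ {g | ∃ i, i ≠ j ∧ g = X i}) with hG
  set ψ : MvPolynomial (Fin n) F →ₐ[F] MvPolynomial (Fin n) F :=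
    aeval (fun i : Fin n => if (i : ℕ) < t - 1 then X i + X j else X i) with hψ
  set ψ' : MvPolynomial (Fin n) F →ₐ[F] MvPolynomial (Fin n) F :=
    aeval (fun i : Fin n => if (i : ℕ) < t - 1 then X i - X j else X i) with hψ'
  have hψXj : ψ (X j) = X j := by
    rw [hψ, aeval_X, if_neg (by omega)]
  have hψ'Xj : ψ' (X j) = X j := by
    rw [hψ', aeval_X, if_neg (by omega)]
  have hψψ' : ∀ g, ψ (ψ' g) = g := by
    have h : ψ.comp ψ' = AlgHom.id F _ := by
      apply MvPolynomial.algHom_ext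
      intro i
      simp only [AlgHom.coe_comp, Function.comp_apply, AlgHom.coe_id, id_eq, hψ', aeval_X]
      by_cases hi : (i : ℕ) < t - 1
      · rw [if_pos hi, map_sub, hψ, aeval_X, if_pos hi, ← hψ, hψXj]
        ring
      · rw [if_neg hi, hψ, aeval_X, if_neg hi]
    exact fun g => DFunLike.congr_fun h g
  have hψ'ψ : ∀ g, ψ' (ψ g) = g := by
    have h : ψ'.comp ψ = AlgHom.id F _ := by
      apply MvPolynomial.algHom_ext
      intro i
      simp only [AlgHom.coe_comp, Function.comp_apply, AlgHom.coe_id, id_eq, hψ, aeval_X]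
      by_cases hi : (i : ℕ) < t - 1
      · rw [if_pos hi, map_add, hψ', aeval_X, if_pos hi, ← hψ', hψ'Xj]
        ring
      · rw [if_neg hi, hψ', aeval_X, if_neg hi]
    exact fun g => DFunLike.congr_fun h g
  have hconj : ∀ g, aeval (fun i : Fin n => if (i : ℕ) < t then X i + 1 else X i) g
      = ψ' (aeval (fun i => if i = j then X j + 1 else X i) (ψ g)) := by
    have h : (aeval (fun i : Fin n => if (i : ℕ) < t then X i + 1 else X i) :
          MvPolynomial (Fin n) F →ₐ[F] MvPolynomial (Fin n) F)
        = ψ'.comp ((aeval (fun i => if i = j then X j + 1 else X i)).comp ψ) := by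
      apply MvPolynomial.algHom_ext
      intro i
      simp only [AlgHom.coe_comp, Function.comp_apply, aeval_X, hψ]
      by_cases h1 : (i : ℕ) < t - 1
      · have hij : i ≠ j := by
          intro hc; rw [hc, hjval] at h1; omega
        rw [if_pos (show (i:ℕ) < t by omega), if_pos h1, map_add, aeval_X, if_neg hij,
          aeval_X, if_pos rfl, map_add, map_add, hψ', aeval_X, if_pos h1, ← hψ', hψ'Xj,
          map_one]
        ring
      · by_cases h2 : i = j
        · subst h2
          rw [if_pos (by omega), if_neg h1, aeval_X, if_pos rfl, map_add, hψ'Xj, map_one]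
        · have hit : ¬ (i : ℕ) < t := by
            have : (i : ℕ) ≠ t - 1 := fun hc => h2 (Fin.ext (by rw [hjval, hc]))
            omega
          rw [if_neg hit, if_neg h1, aeval_X, if_neg h2, hψ', aeval_X, if_neg h1]
    exact fun g => DFunLike.congr_fun h g
  have htel : ∀ d : ℕ, ∀ (i : ℕ) (hd : i + d = t - 1),
      X (⟨i, by omega⟩ : Fin n) - X j ∈ Algebra.adjoin F S := by
    intro d
    induction d with
    | zero =>
      intro i hi
      have : (⟨i, by omega⟩ : Fin n) = j := Fin.ext (by rw [hval, hjval]; omega)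
      rw [this, sub_self]
      exact zero_mem _
    | succ d ih =>
      intro i hi
      have h1 : (X (⟨i, by omega⟩ : Fin n) : MvPolynomial (Fin n) F) - X j
          = ((X (⟨i, by omega⟩ : Fin n) : MvPolynomial (Fin n) F)
              - X (⟨i + 1, by omega⟩ : Fin n))
            + ((X (⟨i + 1, by omega⟩ : Fin n) : MvPolynomial (Fin n) F) - X j) := by ring
      rw [h1]
      refine add_mem (Algebra.subset_adjoin ?_) (ih (i + 1) (by omega))
      exact Or.inl (Or.inl ⟨i, by omega, rfl⟩)
  ext f
  simp only [Set.mem_setOf_eq, SetLike.mem_coe]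
  rw [hconj f]
  constructor
  · intro hfix
    have hB : aeval (fun i => if i = j then X j + 1 else X i) (ψ f) = ψ f := by
      have := congrArg ψ hfix
      rw [hψψ'] at this
      conv_rhs => rw [← this]
    have hmem : ψ f ∈ Algebra.adjoin F G := (part2 j (ψ f)).mp hB
    have h3 : f ∈ (Algebra.adjoin F G).map ψ' := ⟨ψ f, hmem, hψ'ψ f⟩
    rw [AlgHom.map_adjoin] at h3
    refine Algebra.adjoin_le ?_ h3
    rintro x ⟨y, hy, rfl⟩
    rcases hy with hy | ⟨i, hij, rfl⟩
    · rw [Set.mem_singleton_iff] at hy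
      subst hy
      rw [map_sub, map_pow, hψ'Xj]
      exact Algebra.subset_adjoin (Or.inl (Or.inr rfl))
    · by_cases h1 : (i : ℕ) < t - 1
      · rw [hψ', aeval_X, if_pos h1]
        have := htel (t - 1 - (i : ℕ)) (i : ℕ) (by omega)
        simpa using this
      · have hit : t ≤ (i : ℕ) := by
          have : (i : ℕ) ≠ t - 1 := fun hc => hij (Fin.ext (by rw [hjval, hc]))
          omega
        rw [hψ', aeval_X, if_neg h1]
        exact Algebra.subset_adjoin (Or.inr ⟨(i : ℕ), hit, i.2, by simp⟩)
  · intro hmem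
    have hψf : ψ f ∈ Algebra.adjoin F G := by
      have h2 : ψ f ∈ (Algebra.adjoin F S).map ψ := ⟨f, hmem, rfl⟩
      rw [AlgHom.map_adjoin] at h2
      refine Algebra.adjoin_le ?_ h2
      rintro x ⟨y, hy, rfl⟩
      rcases hy with (⟨i, hi, rfl⟩ | hy) | ⟨i, hi1, hi2, rfl⟩
      · rw [map_sub, hψ, aeval_X, aeval_X]
        by_cases hc : i + 1 < t - 1
        · rw [if_pos (show ((⟨i, by omega⟩ : Fin n) : ℕ) < t - 1 by rw [hval]; omega),
            if_pos (show ((⟨i + 1, by omega⟩ : Fin n) : ℕ) < t - 1 by rw [hval]; omega)]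
          have e1 : ((X (⟨i, by omega⟩ : Fin n) : MvPolynomial (Fin n) F) + X j)
                - ((X (⟨i + 1, by omega⟩ : Fin n) : MvPolynomial (Fin n) F) + X j)
              = (X (⟨i, by omega⟩ : Fin n) : MvPolynomial (Fin n) F)
                - X (⟨i + 1, by omega⟩ : Fin n) := by ring
          rw [e1]
          refine sub_mem (Algebra.subset_adjoin (Or.inr ⟨⟨i, by omega⟩, ?_, rfl⟩))
            (Algebra.subset_adjoin (Or.inr ⟨⟨i + 1, by omega⟩, ?_, rfl⟩))
          · intro hc2
            have h5 := congrArg Fin.val hc2; rw [hval, hjval] at h5; omega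
          · intro hc2
            have h5 := congrArg Fin.val hc2; rw [hval, hjval] at h5; omega
        · have hij : (⟨i + 1, by omega⟩ : Fin n) = j := Fin.ext (by rw [hval, hjval]; omega)
          rw [if_pos (show ((⟨i, by omega⟩ : Fin n) : ℕ) < t - 1 by rw [hval]; omega),
            if_neg (show ¬ ((⟨i + 1, by omega⟩ : Fin n) : ℕ) < t - 1 by rw [hval]; omega), hij]
          have e1 : ((X (⟨i, by omega⟩ : Fin n) : MvPolynomial (Fin n) F) + X j) - X j
              = (X (⟨i, by omega⟩ : Fin n) : MvPolynomial (Fin n) F) := by ring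
          rw [e1]
          refine Algebra.subset_adjoin (Or.inr ⟨⟨i, by omega⟩, ?_, rfl⟩)
          intro hc2
          have h5 := congrArg Fin.val hc2; rw [hval, hjval] at h5; omega
      · rw [Set.mem_singleton_iff] at hy
        subst hy
        rw [map_sub, map_pow, hψXj]
        exact Algebra.subset_adjoin (Or.inl rfl)
      · rw [hψ, aeval_X, if_neg (show ¬ ((⟨i, hi2⟩ : Fin n) : ℕ) < t - 1 by rw [hval]; omega)]
        refine Algebra.subset_adjoin (Or.inr ⟨⟨i, hi2⟩, ?_, rfl⟩)
        intro hc2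
        have h5 := congrArg Fin.val hc2; rw [hval, hjval] at h5; omega
    have := (part2 j (ψ f)).mpr hψf
    have h4 := congrArg ψ' this
    rw [hψ'ψ] at h4
    rw [h4]
end

section
/- Let φ be the F_q-automorphism of F_q[x_1,...,x_n] given by x_1 ↦ x_1 + 1 and x_i ↦ x_i for i ≥ 2. Then a polynomial f is fixed by φ if and only if f lies in the F_q-subalgebra generated by x_1^p - x_1, x_2, ..., x_n. -/
open Polynomial in
lemma taylor_one_ASpoly {R : Type*} [CommRing R] (p : ℕ) [Fact p.Prime] [CharP R p] :
    taylor (1 : R) (X ^ p - X) = X ^ p - X := by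
  rw [taylor_apply, sub_comp, pow_comp, X_comp, add_pow_char, map_one, one_pow]
  ring

open Polynomial in
lemma eq_C_of_taylor_one {R : Type*} [CommRing R] [IsDomain R] (p : ℕ) [Fact p.Prime] [CharP R p]
    (r : R[X]) (hdeg : r.natDegree < p) (hr : taylor (1 : R) r = r) :
    r = Polynomial.C (r.coeff 0) := by
  by_cases h0 : r.natDegree = 0
  · exact eq_C_of_natDegree_eq_zero h0
  · exfalso
    set d := r.natDegree with hd
    have hd1 : 1 ≤ d := Nat.one_le_iff_ne_zero.mpr h0
    have hcoeff := congrArg (fun g => Polynomial.coeff g (d - 1)) hr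
    simp only [taylor_coeff] at hcoeff
    have hg : (hasseDeriv (d - 1) r).natDegree < 2 :=
      lt_of_le_of_lt (natDegree_hasseDeriv_le r _) (by omega)
    rw [eval_eq_sum_range' hg] at hcoeff
    rw [Finset.sum_range_succ, Finset.sum_range_succ, Finset.sum_range_zero] at hcoeff
    simp only [hasseDeriv_coeff, one_pow, mul_one, zero_add] at hcoeff
    have e1 : (0 + (d - 1)).choose (d - 1) = 1 := by simp
    have e2 : (1 + (d - 1)) = d := by omega
    have e3 : d.choose (d - 1) = d := by
      have := Nat.choose_symm (n := d) (k := 1) hd1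
      simpa using this
    rw [e2, Nat.choose_self, e3] at hcoeff
    have hmul : (d : R) * r.coeff d = 0 := by
      have := hcoeff
      push_cast at this ⊢
      linear_combination this
    have hdR : (d : R) ≠ 0 := by
      rw [Ne, CharP.cast_eq_zero_iff R p]
      exact Nat.not_dvd_of_pos_of_lt hd1 hdeg
    have hrne : r ≠ 0 := fun h => h0 (by simp [hd, h])
    have : r.coeff d ≠ 0 := by
      rw [hd]; exact Polynomial.leadingCoeff_ne_zero.mpr hrne
    exact this ((mul_eq_zero.mp hmul).resolve_left hdR)

open Polynomial in
lemma degree_taylor_one {R : Type*} [CommRing R] (s : R[X]) :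
    (taylor (1 : R) s).degree = s.degree := by
  by_cases hs : s = 0
  · simp [hs]
  · have h1 : taylor (1 : R) s ≠ 0 := fun h => hs (taylor_injective 1 (by simp [h]))
    rw [degree_eq_natDegree hs, degree_eq_natDegree h1, natDegree_taylor]

open Polynomial in
lemma key_poly {R : Type*} [CommRing R] [IsDomain R] (p : ℕ) [Fact p.Prime] [CharP R p]
    (f : R[X]) (hf : taylor (1 : R) f = f) :
    ∃ h : R[X], f = Polynomial.aeval (X ^ p - X : R[X]) h := by
  have hp2 : 2 ≤ p := (Fact.out : p.Prime).two_le
  set w : R[X] := X ^ p - X with hw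
  have hmonic : w.Monic := monic_X_pow_sub (by
    rw [degree_X]
    exact_mod_cast Nat.lt_of_lt_of_le Nat.one_lt_two hp2)
  have hndw : w.natDegree = p := by
    rw [hw, natDegree_sub_eq_left_of_natDegree_lt] <;> simp [Nat.lt_of_lt_of_le Nat.one_lt_two hp2]
  generalize hN : f.natDegree = N
  induction N using Nat.strong_induction_on generalizing f with
  | _ N ih =>
  by_cases hsmall : f.natDegree < p
  · refine ⟨Polynomial.C (f.coeff 0), ?_⟩
    rw [aeval_C]
    exact eq_C_of_taylor_one p f hsmall hf
  · push_neg at hsmall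
    set r := f %ₘ w with hr
    set g := f /ₘ w with hg
    have hdiv : r + w * g = f := modByMonic_add_div f w
    have hdr : r.degree < w.degree := degree_modByMonic_lt f hmonic
    have key : taylor (1 : R) r + w * taylor (1 : R) g = f := by
      calc taylor (1 : R) r + w * taylor (1 : R) g
          = taylor (1 : R) r + taylor (1 : R) w * taylor (1 : R) g := by
            rw [show w = X ^ p - X from hw, taylor_one_ASpoly]
        _ = taylor (1 : R) (r + w * g) := by rw [← taylor_mul, map_add]
        _ = f := by rw [hdiv, hf]
    have huniq := div_modByMonic_unique (taylor (1 : R) g) (taylor (1 : R) r) hmonic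
      ⟨key, by rwa [degree_taylor_one]⟩
    have hgfix : taylor (1 : R) g = g := by rw [← huniq.1]
    have hrfix : taylor (1 : R) r = r := by rw [← huniq.2]
    have hrdeg : r.natDegree < p := by
      by_cases hr0 : r = 0
      · simp [hr0]; omega
      · have := natDegree_lt_natDegree hr0 hdr
        omega
    have hgdeg : g.natDegree < N := by
      rw [hg, natDegree_divByMonic f hmonic, hndw]
      omega
    obtain ⟨h', hh'⟩ := ih g.natDegree hgdeg g hgfix rfl
    refine ⟨Polynomial.X * h' + Polynomial.C (r.coeff 0), ?_⟩
    have hrc : r = Polynomial.C (r.coeff 0) := eq_C_of_taylor_one p r hrdeg hrfix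
    rw [map_add, map_mul, aeval_X, aeval_C, ← hh', ← hdiv, Polynomial.algebraMap_eq,
      ← hrc]
    ring

open MvPolynomial

/-- Fixed-point subring of the automorphism `x_1 ↦ x_1 + 1`, `x_i ↦ x_i` for `i ≥ 2`:
`f` is fixed iff `f` lies in the subalgebra generated by `x_1^p - x_1, x_2, …, x_n`. -/
theorem stmt7 (p : ℕ) [Fact p.Prime] (F : Type*) [Field F] [Fintype F] [CharP F p]
    {n : ℕ} (hn : 0 < n) (f : MvPolynomial (Fin n) F) :
    aeval (fun i : Fin n => if (i : ℕ) = 0 then X i + 1 else X i) f = f ↔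
      f ∈ Algebra.adjoin F
        ({X (⟨0, hn⟩ : Fin n) ^ p - X (⟨0, hn⟩ : Fin n)} ∪
          {g : MvPolynomial (Fin n) F | ∃ (i : ℕ) (h1 : 1 ≤ i) (h2 : i < n),
            g = X (⟨i, h2⟩ : Fin n)}) := by
  obtain ⟨m, rfl⟩ : ∃ m, n = m + 1 := ⟨n - 1, by omega⟩
  have hz : (⟨0, hn⟩ : Fin (m + 1)) = 0 := Fin.ext (by simp)
  rw [hz]
  set R := MvPolynomial (Fin m) F with hR
  set φ : MvPolynomial (Fin (m + 1)) F →ₐ[F] MvPolynomial (Fin (m + 1)) F :=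
    aeval (fun i : Fin (m + 1) => if (i : ℕ) = 0 then X i + 1 else X i) with hφ
  set S := Algebra.adjoin F
      ({X (0 : Fin (m + 1)) ^ p - X 0} ∪
        {g : MvPolynomial (Fin (m + 1)) F | ∃ (i : ℕ) (h1 : 1 ≤ i) (h2 : i < m + 1),
          g = X (⟨i, h2⟩ : Fin (m + 1))}) with hS
  have hX0 : X (0 : Fin (m + 1)) ^ p - X 0 ∈ S := Algebra.subset_adjoin (Or.inl rfl)
  constructor
  · -- hard direction
    intro hfix
    set e := MvPolynomial.finSuccEquiv F m with he
    set ψ : Polynomial R →ₐ[F] Polynomial R :=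
      (Polynomial.aeval (Polynomial.X + 1 : Polynomial R)).restrictScalars F with hψ
    have hcomm : e.toAlgHom.comp φ = ψ.comp e.toAlgHom := by
      apply MvPolynomial.algHom_ext
      intro i
      refine Fin.cases ?_ ?_ i
      · simp [hφ, hψ, he, MvPolynomial.finSuccEquiv_X_zero]
      · intro j
        simp [hφ, hψ, he, MvPolynomial.finSuccEquiv_X_succ, Fin.val_succ]
    have hfix' : Polynomial.taylor (1 : R) (e f) = e f := by
      have h1 : ψ (e f) = e (φ f) := (AlgHom.congr_fun hcomm f).symm
      calc Polynomial.taylor (1 : R) (e f)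
          = ψ (e f) := by
            rw [Polynomial.taylor_apply, Polynomial.comp_eq_aeval]
            simp [hψ]
        _ = e f := by rw [h1, hfix]
    obtain ⟨h, hh⟩ := key_poly p (e f) hfix'
    have hsuc : ∀ j : Fin m, X (Fin.succ j) ∈ S := fun j =>
      Algebra.subset_adjoin (Or.inr ⟨(j : ℕ) + 1, le_add_self, by omega,
        congrArg X (Fin.ext rfl)⟩)
    have hCmem : ∀ a : R, e.symm (Polynomial.C a) ∈ S := by
      intro a
      have ha : a ∈ Algebra.adjoin F (Set.range (X : Fin m → R)) := by
        rw [MvPolynomial.adjoin_range_X]; exact Algebra.mem_top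
      induction ha using Algebra.adjoin_induction with
      | mem x hx =>
        obtain ⟨j, rfl⟩ := hx
        have : e.symm (Polynomial.C (X j)) = X (Fin.succ j) := by
          rw [AlgEquiv.symm_apply_eq, MvPolynomial.finSuccEquiv_X_succ]
        rw [this]; exact hsuc j
      | algebraMap c =>
        have : Polynomial.C (algebraMap F R c) = algebraMap F (Polynomial R) c := rfl
        rw [this, AlgEquiv.commutes]
        exact Subalgebra.algebraMap_mem S c
      | add x y hx hy ihx ihy => rw [map_add, map_add]; exact add_mem ihx ihy
      | mul x y hx hy ihx ihy => rw [map_mul, map_mul]; exact mul_mem ihx ihy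
    have hws : e.symm (Polynomial.X ^ p - Polynomial.X : Polynomial R)
        = X (0 : Fin (m + 1)) ^ p - X 0 := by
      rw [AlgEquiv.symm_apply_eq]
      rw [map_sub, map_pow, MvPolynomial.finSuccEquiv_X_zero]
    have main : ∀ h : Polynomial R,
        e.symm (Polynomial.aeval (Polynomial.X ^ p - Polynomial.X : Polynomial R) h) ∈ S := by
      intro h
      induction h using Polynomial.induction_on' with
      | add q r hq hr => rw [map_add, map_add]; exact add_mem hq hr
      | monomial k a =>
        rw [Polynomial.aeval_monomial, map_mul, map_pow, hws]
        have : (algebraMap R (Polynomial R)) a = Polynomial.C a := rfl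
        rw [this]
        exact mul_mem (hCmem a) (pow_mem hX0 k)
    have : f = e.symm (Polynomial.aeval (Polynomial.X ^ p - Polynomial.X : Polynomial R) h) := by
      rw [← hh, AlgEquiv.symm_apply_apply]
    rw [this]
    exact main h
  · -- easy direction
    intro hmem
    have hle : S ≤ AlgHom.equalizer φ (AlgHom.id F (MvPolynomial (Fin (m + 1)) F)) := by
      rw [hS]
      apply Algebra.adjoin_le
      rintro g (hg | ⟨i, h1, h2, rfl⟩)
      · rw [Set.mem_singleton_iff] at hg
        subst hg
        show φ _ = _
        simp only [hφ, map_sub, map_pow, aeval_X, Fin.val_zero, if_true, AlgHom.coe_id, id_eq]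
        rw [add_pow_char]
        ring
      · show φ _ = _
        rw [hφ]
        simp only [aeval_X]
        rw [if_neg (by omega)]
        rfl
    exact hle hmem
end

section
/- Every minimal product-one sequence of length m in the cyclic group C_m of order m is of the form (g, g, ..., g) for some generator g of C_m. In particular, the Davenport constant of C_m is m. -/
open Finset


lemma prefix_inj {H : Type*} [CommGroup H] {k : ℕ} (b : Fin k → H)
    (hmin : ∀ s : Finset (Fin k), s.Nonempty → s ≠ Finset.univ → ∏ i ∈ s, b i ≠ 1) :
    Function.Injective (fun j : Fin k => ∏ t ∈ Iio j, b t) := by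
  have key : ∀ i j : Fin k, i < j → (∏ t ∈ Iio i, b t) ≠ ∏ t ∈ Iio j, b t := by
    intro i j hij heq
    have hun : Iio i ∪ Ico i j = Iio j := by
      ext t; simp only [mem_union, mem_Iio, mem_Ico, Fin.lt_def, Fin.le_def] at *; omega
    have hdis : Disjoint (Iio i) (Ico i j) := by
      rw [Finset.disjoint_left]
      intro t ht ht'
      simp only [mem_Iio, mem_Ico] at *
      exact absurd (lt_of_le_of_lt ht'.1 ht) (lt_irrefl _)
    have hsplit : (∏ t ∈ Iio i, b t) * ∏ t ∈ Ico i j, b t = ∏ t ∈ Iio j, b t := by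
      rw [← Finset.prod_union hdis, hun]
    have hprod : ∏ t ∈ Ico i j, b t = 1 := by
      rw [heq] at hsplit
      exact mul_left_cancel (a := ∏ t ∈ Iio j, b t) (by rw [mul_one]; exact hsplit)
    refine hmin (Ico i j) ⟨i, ?_⟩ ?_ hprod
    · simp [hij]
    · intro h
      have : j ∈ Ico i j := h ▸ mem_univ j
      simp at this
  intro i j heq
  rcases lt_trichotomy i j with h | h | h
  · exact absurd heq (key i j h)
  · exact h
  · exact absurd heq.symm (key j i h)

-- swap step
lemma swap_step {H : Type*} [CommGroup H] [Fintype H] {m : ℕ} (hm : Fintype.card H = m)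
    (a : Fin m → H)
    (hmin : ∀ s : Finset (Fin m), s.Nonempty → s ≠ Finset.univ → ∏ i ∈ s, a i ≠ 1)
    (i : ℕ) (hi : i + 1 < m) :
    a ⟨i, Nat.lt_of_succ_lt hi⟩ = a ⟨i + 1, hi⟩ := by
  set x : Fin m := ⟨i, Nat.lt_of_succ_lt hi⟩ with hx
  set y : Fin m := ⟨i + 1, hi⟩ with hy
  have hxy : x ≠ y := by simp [hx, hy, Fin.ext_iff]
  set e := Equiv.swap x y with he
  set a' : Fin m → H := a ∘ e with ha'
  have himg : ∀ s : Finset (Fin m), ∏ t ∈ s, a' t = ∏ t ∈ s.image e, a t := by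
    intro s
    rw [Finset.prod_image (fun u _ v _ h => e.injective h)]
    rfl
  have hmin' : ∀ s : Finset (Fin m), s.Nonempty → s ≠ Finset.univ → ∏ i ∈ s, a' i ≠ 1 := by
    intro s hs hsu
    rw [himg]
    refine hmin _ (hs.image e) ?_
    intro h
    apply hsu
    apply Finset.eq_univ_of_card
    have := congrArg Finset.card h
    rwa [Finset.card_image_of_injective _ e.injective] at this
  have hcard : Fintype.card (Fin m) = Fintype.card H := by simp [hm]
  have hP : Function.Bijective (fun j : Fin m => ∏ t ∈ Iio j, a t) :=
    (Fintype.bijective_iff_injective_and_card _).mpr ⟨prefix_inj a hmin, hcard⟩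
  have hP' : Function.Bijective (fun j : Fin m => ∏ t ∈ Iio j, a' t) :=
    (Fintype.bijective_iff_injective_and_card _).mpr ⟨prefix_inj a' hmin', hcard⟩
  -- agreement off y
  have hagree : ∀ j : Fin m, j ≠ y → (∏ t ∈ Iio j, a' t) = ∏ t ∈ Iio j, a t := by
    intro j hj
    rw [himg]
    congr 1
    have hsub : (Iio j).image e ⊆ Iio j := by
      intro u hu
      rcases Finset.mem_image.mp hu with ⟨t, ht, rfl⟩
      rw [mem_Iio] at ht ⊢
      rcases eq_or_ne t x with rfl | htx
      · -- e t = y ; need y < j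
        rw [Equiv.swap_apply_left]
        have : (i : ℕ) < j := ht
        have : (i+1 : ℕ) ≠ j := fun h => hj (Fin.ext h.symm)
        simp only [Fin.lt_def] at *
        show i + 1 < (j : ℕ)
        omega
      · rcases eq_or_ne t y with rfl | hty
        · rw [Equiv.swap_apply_right]
          exact lt_trans (by simp [hx, hy, Fin.lt_def]) ht
        · rw [Equiv.swap_apply_of_ne_of_ne htx hty]; exact ht
    apply Finset.eq_of_subset_of_card_le hsub
    rw [Finset.card_image_of_injective _ e.injective]
  -- P y = P' y
  have hPy : (∏ t ∈ Iio y, a t) = ∏ t ∈ Iio y, a' t := by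
    obtain ⟨z, hz⟩ := hP.2 (∏ t ∈ Iio y, a' t)
    rcases eq_or_ne z y with rfl | hzy
    · exact hz
    · exfalso
      have h1 : (∏ t ∈ Iio z, a' t) = ∏ t ∈ Iio y, a' t := by
        rw [hagree z hzy]; exact hz
      exact hzy (hP'.1 h1)
  -- compute both sides
  have hIio : Iio y = insert x (Iio x) := by
    ext t
    simp only [mem_insert, mem_Iio, Fin.lt_def, Fin.ext_iff, hx, hy]
    omega
  have hnx : x ∉ Iio x := by simp
  have hfix : ∀ t ∈ Iio x, a' t = a t := by
    intro t ht
    rw [mem_Iio] at ht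
    have h1 : t ≠ x := ne_of_lt ht
    have h2 : t ≠ y := ne_of_lt (lt_trans ht (by simp [hx, hy, Fin.lt_def]))
    simp [ha', he, Equiv.swap_apply_of_ne_of_ne h1 h2]
  have hax : a' x = a y := by simp [ha', he]
  rw [hIio, Finset.prod_insert hnx, Finset.prod_insert hnx, hax,
    Finset.prod_congr rfl hfix] at hPy
  exact mul_right_cancel hPy

/-- In a cyclic group of order `m`: every minimal product-one sequence of length `m` is
constant equal to some generator, every minimal product-one sequence has length at most
`m`, and some minimal product-one sequence of length `m` exists (so `D(C_m) = m`). -/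
theorem stmt15 (H : Type*) [CommGroup H] [Fintype H] (hc : IsCyclic H) (m : ℕ)
    (hm : Fintype.card H = m) :
    (∀ a : Fin m → H, ∏ i, a i = 1 →
        (∀ s : Finset (Fin m), s.Nonempty → s ≠ Finset.univ → ∏ i ∈ s, a i ≠ 1) →
        ∃ g : H, orderOf g = m ∧ ∀ i, a i = g) ∧
    (∀ (k : ℕ) (b : Fin k → H), ∏ i, b i = 1 →
        (∀ s : Finset (Fin k), s.Nonempty → s ≠ Finset.univ → ∏ i ∈ s, b i ≠ 1) →
        k ≤ m) ∧
    (∃ b : Fin m → H, ∏ i, b i = 1 ∧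
        ∀ s : Finset (Fin m), s.Nonempty → s ≠ Finset.univ → ∏ i ∈ s, b i ≠ 1) := by
  have hm0 : 0 < m := hm ▸ Fintype.card_pos
  refine ⟨?_, ?_, ?_⟩
  · -- part 1
    intro a hprod hmin
    have hconst : ∀ j : Fin m, a j = a ⟨0, hm0⟩ := by
      intro ⟨n, hn⟩
      induction n with
      | zero => rfl
      | succ n ih =>
        rw [← swap_step hm a hmin n hn]
        exact ih (Nat.lt_of_succ_lt hn)
    set g := a ⟨0, hm0⟩ with hg
    refine ⟨g, ?_, hconst⟩
    have hgm : g ^ m = 1 := by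
      rw [← hprod, Finset.prod_congr rfl (fun j _ => hconst j)]
      simp [Finset.prod_const]
    have hdvd : orderOf g ∣ m := orderOf_dvd_of_pow_eq_one hgm
    have hle : orderOf g ≤ m := Nat.le_of_dvd hm0 hdvd
    rcases lt_or_eq_of_le hle with hlt | heq
    · exfalso
      set d := orderOf g with hd
      have hd0 : 0 < d := orderOf_pos g
      set s : Finset (Fin m) := Iio ⟨d, hlt⟩ with hs
      have hcard : s.card = d := by simp [hs, Fin.card_Iio]
      refine hmin s ?_ ?_ ?_
      · rw [← Finset.card_pos, hcard]; exact hd0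
      · intro h
        have : (⟨d, hlt⟩ : Fin m) ∈ s := h ▸ mem_univ _
        simp [hs] at this
      · rw [Finset.prod_congr rfl (fun j _ => hconst j), Finset.prod_const, hcard]
        exact pow_orderOf_eq_one g
    · exact heq
  · -- part 2
    intro k b hprod hmin
    calc k = Fintype.card (Fin k) := (Fintype.card_fin k).symm
    _ ≤ Fintype.card H := Fintype.card_le_of_injective _ (prefix_inj b hmin)
    _ = m := hm
  · -- part 3
    obtain ⟨g, hg⟩ := hc.exists_generator
    have horder : orderOf g = m := by
      rw [orderOf_eq_card_of_forall_mem_zpowers hg, Nat.card_eq_fintype_card, hm]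
    refine ⟨fun _ => g, ?_, ?_⟩
    · rw [Finset.prod_const, card_univ, Fintype.card_fin, ← horder, pow_orderOf_eq_one]
    · intro s hs hsu h
      rw [Finset.prod_const] at h
      have hdvd : m ∣ s.card := by
        have := orderOf_dvd_of_pow_eq_one h
        rwa [horder] at this
      have h1 : m ≤ s.card := Nat.le_of_dvd (Finset.card_pos.mpr hs) hdvd
      have h2 : s.card ≤ m := by
        calc s.card ≤ Fintype.card (Fin m) := Finset.card_le_univ s
        _ = m := Fintype.card_fin m
      exact hsu (Finset.eq_univ_of_card s (by rw [le_antisymm h2 h1, Fintype.card_fin]))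
end

section
/- A polynomial f in F_q[x] satisfies f(x + b) = f(x) for all b in F_q if and only if f(x) = g(x^q - x) for some g in F_q[x]. -/
open Polynomial

section Aux

variable {F : Type*} [Field F] [Fintype F]

lemma frob_key17 (b : F) : (X + C b : F[X]) ^ Fintype.card F = X ^ Fintype.card F + C b := by
  obtain ⟨p, hchar⟩ := CharP.exists F
  obtain ⟨n, hp, hcard⟩ := FiniteField.card F p
  haveI := Fact.mk hp
  haveI : CharP F[X] p := Polynomial.instCharP p
  rw [hcard, add_pow_char_pow, ← C_pow, ← hcard, FiniteField.pow_card]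

lemma comp_key17 (b : F) :
    (X ^ Fintype.card F - X : F[X]).comp (X + C b) = X ^ Fintype.card F - X := by
  rw [sub_comp, pow_comp, X_comp, frob_key17]
  ring

lemma const_of_invariant17 (r : F[X]) (hd : r.natDegree < Fintype.card F)
    (hr : ∀ b : F, r.comp (X + C b) = r) : r = C (r.eval 0) := by
  have key : ∀ b : F, r.eval b = r.eval 0 := by
    intro b
    have := congrArg (eval 0) (hr b)
    simpa [eval_comp] using this
  have h0 : r - C (r.eval 0) = 0 := by
    apply eq_zero_of_natDegree_lt_card_of_eval_eq_zero (f := (id : F → F))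
      _ Function.injective_id
    · intro i
      simp [key i]
    · calc (r - C (r.eval 0)).natDegree ≤ r.natDegree := natDegree_sub_C.le
        _ < Fintype.card F := hd
  exact sub_eq_zero.mp h0

lemma main_dir17 (n : ℕ) : ∀ f : F[X], f.natDegree ≤ n →
    (∀ b : F, f.comp (X + C b) = f) →
    ∃ g : F[X], f = g.comp (X ^ Fintype.card F - X) := by
  induction n using Nat.strong_induction_on with
  | _ n ih =>
  intro f hfn hf
  set q := Fintype.card F with hqdef
  have hq1 : 1 < q := Fintype.one_lt_card
  have mq : (X ^ q - X : F[X]).Monic := by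
    apply monic_X_pow_sub
    rw [degree_X]
    exact_mod_cast hq1
  have hdq : (X ^ q - X : F[X]).degree = q := by
    rw [degree_sub_eq_left_of_degree_lt, degree_X_pow]
    rw [degree_X_pow, degree_X]
    exact_mod_cast hq1
  by_cases hdeg : f.natDegree < q
  · refine ⟨C (f.eval 0), ?_⟩
    rw [const_of_invariant17 f hdeg hf]
    simp
  · push_neg at hdeg
    set r := f %ₘ (X ^ q - X) with hr
    set h := f /ₘ (X ^ q - X) with hh
    have hfeq : f = (X ^ q - X) * h + r := by
      have := modByMonic_add_div f (X ^ q - X)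
      linear_combination -this
    have hrd : r.natDegree < q := by
      have := degree_modByMonic_lt f mq
      rw [hdq] at this
      have h2 : r.degree < (q : WithBot ℕ) := this
      rcases eq_or_ne r 0 with h0 | h0
      · simpa [h0] using hq1.trans_le' (by norm_num)
      · rwa [degree_eq_natDegree h0, Nat.cast_lt] at h2
    have hinv : ∀ b : F, h.comp (X + C b) = h ∧ r.comp (X + C b) = r := by
      intro b
      have hcomp : r.comp (X + C b) + (X ^ q - X) * h.comp (X + C b) = f := by
        conv_rhs => rw [← hf b]
        conv_rhs => rw [hfeq]
        rw [add_comp, mul_comp, sub_comp, pow_comp, X_comp, frob_key17]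
        ring
      have hdr : (r.comp (X + C b)).degree < (X ^ q - X : F[X]).degree := by
        rw [hdq]
        calc (r.comp (X + C b)).degree ≤ ((r.comp (X + C b)).natDegree : WithBot ℕ) :=
              degree_le_natDegree
          _ = (r.natDegree : WithBot ℕ) := by
              rw [natDegree_comp, natDegree_X_add_C, mul_one]
          _ < (q : WithBot ℕ) := by exact_mod_cast hrd
      obtain ⟨h1, h2⟩ := div_modByMonic_unique (h.comp (X + C b)) (r.comp (X + C b)) mq
        ⟨hcomp, hdr⟩
      exact ⟨h1.symm, h2.symm⟩
    have hqnd : (X ^ q - X : F[X]).natDegree = q := natDegree_eq_of_degree_eq_some hdq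
    have hhd : h.natDegree < n := by
      rw [hh, natDegree_divByMonic f mq, hqnd]
      omega
    obtain ⟨g, hg⟩ := ih h.natDegree hhd h le_rfl (fun b => (hinv b).1)
    have hr0 : r = C (r.eval 0) := const_of_invariant17 r hrd (fun b => (hinv b).2)
    refine ⟨X * g + C (r.eval 0), ?_⟩
    rw [hfeq, hg, hr0, add_comp, mul_comp, X_comp, C_comp]
    simp

end Aux

/-- `f(x + b) = f(x)` for all `b ∈ F_q` iff `f(x) = g(x^q - x)` for some `g ∈ F_q[x]`. -/
theorem stmt17 (F : Type*) [Field F] [Fintype F] (f : F[X]) :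
    (∀ b : F, f.comp (X + C b) = f) ↔
      ∃ g : F[X], f = g.comp (X ^ Fintype.card F - X) := by
  constructor
  · exact main_dir17 f.natDegree f le_rfl
  · rintro ⟨g, rfl⟩ b
    rw [comp_assoc, comp_key17]
end
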